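/- Let T be the monotone transport map from the standard normal to the exponential power distribution with density proportional to e^{-λ|x|^p}. Then its derivative satisfies T'(z) ~ (z/(λp))·(z²/(2λ))^{1/p - 1} as z → ∞. -/

import Mathlib

open Real MeasureTheory Filter
open Set Topology

/-- The standard normal density. -/
noncomputable def stdNormalPDF (z : ℝ) : ℝ :=
  (1 / Real.sqrt (2 * Real.pi)) * Real.exp (-z ^ 2 / 2)

/-- The standard normal cumulative distribution function. -/
noncomputable def stdNormalCDF (z : ℝ) : ℝ := ∫ t in Set.Iic z, stdNormalPDF t

/-- Normalizing constant of the exponential power distribution. -/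
noncomputable def expPowerZ (p lam : ℝ) : ℝ := ∫ x : ℝ, Real.exp (-lam * |x| ^ p)

/-- The density of the exponential power distribution with parameters `p, lam`. -/
noncomputable def expPowerPDF (p lam : ℝ) (x : ℝ) : ℝ :=
  (expPowerZ p lam)⁻¹ * Real.exp (-lam * |x| ^ p)

/-- The CDF of the exponential power distribution with parameters `p, lam`. -/
noncomputable def expPowerCDF (p lam : ℝ) (x : ℝ) : ℝ :=
  ∫ t in Set.Iic x, expPowerPDF p lam t


variable {p lam : ℝ}

lemma epCont (hp : 0 < p) : Continuous (fun x : ℝ => exp (-lam * |x| ^ p)) := by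
  apply Real.continuous_exp.comp
  exact continuous_const.mul (continuous_abs.rpow_const (fun x => Or.inr hp.le))

lemma epIntOn (hp : 0 < p) (hlam : 0 < lam) :
    IntegrableOn (fun x : ℝ => exp (-lam * x ^ p)) (Ioi 0) := by
  rw [← integrableOn_Ioi_comp_rpow_iff (fun x : ℝ => exp (-lam * x ^ p))
    (one_div_ne_zero hp.ne')]
  have h := integrableOn_rpow_mul_exp_neg_mul_rpow (p := 1) (s := 1/p - 1) (b := lam)
    (by simpa using one_div_pos.mpr hp) zero_lt_one hlam
  simp only [Real.rpow_one] at h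
  have h2 : IntegrableOn (fun x : ℝ => |1/p| * (x ^ (1/p - 1) * exp (-lam * x))) (Ioi 0) :=
    h.const_mul _
  refine h2.congr_fun (fun x hx => ?_) measurableSet_Ioi
  have hx0 : (0:ℝ) < x := hx
  have hxx : (x ^ (1/p)) ^ p = x := by
    rw [← Real.rpow_mul hx0.le, one_div_mul_cancel hp.ne', Real.rpow_one]
  rw [hxx, smul_eq_mul, mul_assoc]

lemma epInt (hp : 0 < p) (hlam : 0 < lam) :
    Integrable (fun x : ℝ => exp (-lam * |x| ^ p)) := by
  have hmeas : AEStronglyMeasurable (fun x : ℝ => exp (-lam * |x| ^ p)) volume :=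
    (epCont hp).aestronglyMeasurable
  have hIoi : IntegrableOn (fun x : ℝ => exp (-lam * |x| ^ p)) (Ioi 0) := by
    refine (epIntOn hp hlam).congr_fun (fun x hx => ?_) measurableSet_Ioi
    rw [abs_of_pos hx]
  have hIci : IntegrableOn (fun x : ℝ => exp (-lam * |x| ^ p)) (Ici 0) := by
    rwa [integrableOn_Ici_iff_integrableOn_Ioi]
  have hIic : IntegrableOn (fun x : ℝ => exp (-lam * |x| ^ p)) (Iic 0) := by
    rw [← Measure.map_neg_eq_self (volume : Measure ℝ)]
    have m : MeasurableEmbedding fun x : ℝ => -x := (Homeomorph.neg ℝ).measurableEmbedding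
    rw [m.integrableOn_map_iff]
    simpa [Function.comp_def, abs_neg, neg_preimage, neg_Iic, neg_zero] using hIci
  rw [← integrableOn_univ, ← Iic_union_Ioi (a := (0:ℝ))]
  exact hIic.union hIoi

lemma Zpos (hp : 0 < p) (hlam : 0 < lam) : 0 < expPowerZ p lam := by
  rw [expPowerZ]
  rw [integral_pos_iff_support_of_nonneg (fun x => (exp_pos _).le) (epInt hp hlam)]
  have : (Function.support fun x : ℝ => exp (-(lam * |x| ^ p))) = Set.univ := by
    ext x; simp [Function.mem_support, (exp_pos _).ne']
  simp only [neg_mul] at this ⊢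
  simp [this]

lemma pdfPos (hp : 0 < p) (hlam : 0 < lam) (x : ℝ) : 0 < expPowerPDF p lam x :=
  mul_pos (inv_pos.mpr (Zpos hp hlam)) (exp_pos _)

lemma pdfCont (hp : 0 < p) : Continuous (expPowerPDF p lam) :=
  continuous_const.mul (epCont hp)

lemma pdfInt (hp : 0 < p) (hlam : 0 < lam) : Integrable (expPowerPDF p lam) :=
  (epInt hp hlam).const_mul _

lemma pdfTotal (hp : 0 < p) (hlam : 0 < lam) : ∫ x, expPowerPDF p lam x = 1 := by
  simp only [expPowerPDF]
  rw [integral_const_mul, show (∫ x : ℝ, exp (-lam * |x| ^ p)) = expPowerZ p lam from rfl,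
    inv_mul_cancel₀ (Zpos hp hlam).ne']

lemma gPos (z : ℝ) : 0 < stdNormalPDF z := by
  apply mul_pos _ (exp_pos _)
  rw [one_div, inv_pos]
  exact Real.sqrt_pos.mpr (by positivity)

lemma gCont : Continuous stdNormalPDF := by
  unfold stdNormalPDF; fun_prop

lemma gExpForm : (fun z : ℝ => exp (-z ^ 2 / 2)) = fun z => exp (-(1/2) * z ^ 2) := by
  funext z; ring_nf

lemma gInt : Integrable stdNormalPDF := by
  unfold stdNormalPDF
  apply Integrable.const_mul
  rw [gExpForm]
  exact integrable_exp_neg_mul_sq (by norm_num)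

lemma gTotal : ∫ z, stdNormalPDF z = 1 := by
  unfold stdNormalPDF
  rw [integral_const_mul, gExpForm, integral_gaussian]
  rw [one_div, inv_mul_eq_one₀ (by positivity)]
  norm_num
  ring

section CDF
variable {f : ℝ → ℝ}

lemma cdf_mono (hf : Integrable f) (h0 : ∀ x, 0 ≤ f x) :
    Monotone (fun x => ∫ t in Iic x, f t) := fun a b hab =>
  setIntegral_mono_set hf.integrableOn (Eventually.of_forall h0)
    (HasSubset.Subset.eventuallyLE (Iic_subset_Iic.mpr hab))

lemma cdf_le (hf : Integrable f) (h0 : ∀ x, 0 ≤ f x) (x : ℝ) :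
    ∫ t in Iic x, f t ≤ ∫ t, f t :=
  setIntegral_le_integral hf (Eventually.of_forall h0)

lemma cdf_tendsto (hf : Integrable f) (h0 : ∀ x, 0 ≤ f x) :
    Tendsto (fun x => ∫ t in Iic x, f t) atTop (𝓝 (∫ t, f t)) := by
  have hmono := cdf_mono hf h0
  have hbdd : BddAbove (Set.range fun x => ∫ t in Iic x, f t) := by
    refine ⟨∫ t, f t, ?_⟩
    rintro y ⟨x, rfl⟩
    exact cdf_le hf h0 x
  have h1 := tendsto_atTop_ciSup hmono hbdd
  have hU : (⋃ n : ℕ, Iic (n : ℝ)) = Set.univ := by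
    ext x
    simp only [mem_iUnion, mem_Iic, mem_univ, iff_true]
    exact exists_nat_ge x
  have h2 : Tendsto (fun n : ℕ => ∫ t in Iic (n : ℝ), f t) atTop (𝓝 (∫ t, f t)) := by
    have := tendsto_setIntegral_of_monotone (f := f) (μ := volume)
      (s := fun n : ℕ => Iic (n : ℝ)) (fun n => measurableSet_Iic)
      (fun a b hab => Iic_subset_Iic.mpr (by exact_mod_cast hab))
      (by rw [hU]; exact hf.integrableOn)
    rwa [hU, setIntegral_univ] at this
  have h3 : Tendsto (fun n : ℕ => ∫ t in Iic (n : ℝ), f t) atTop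
      (𝓝 (⨆ x : ℝ, ∫ t in Iic x, f t)) :=
    h1.comp tendsto_natCast_atTop_atTop
  rwa [tendsto_nhds_unique h3 h2] at h1

lemma cdf_lt (hf : Integrable f) (h0 : ∀ x, 0 < f x) (hc : Continuous f) (x : ℝ) :
    ∫ t in Iic x, f t < ∫ t, f t := by
  have hsplit : ∫ t, f t = (∫ t in Iic x, f t) + ∫ t in Ioi x, f t := by
    rw [← integral_add_compl measurableSet_Iic hf, compl_Iic]
  have hpos : 0 < ∫ t in Ioi x, f t := by
    have h1 : ∫ t in Ioc x (x+1), f t ≤ ∫ t in Ioi x, f t :=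
      setIntegral_mono_set (hf.integrableOn)
        (Eventually.of_forall (fun t => (h0 t).le))
        (HasSubset.Subset.eventuallyLE Ioc_subset_Ioi_self)
    refine lt_of_lt_of_le ?_ h1
    rw [← intervalIntegral.integral_of_le (by linarith : x ≤ x + 1)]
    exact intervalIntegral.intervalIntegral_pos_of_pos (hc.intervalIntegrable x (x+1)) h0
      (by linarith)
  linarith

lemma cdf_hasDeriv (hf : Integrable f) (hc : Continuous f) (z : ℝ) :
    HasDerivAt (fun x => ∫ t in Iic x, f t) (f z) z := by
  have key : ∀ x : ℝ, (∫ t in Iic x, f t) = (∫ t in Iic 0, f t) + ∫ t in (0:ℝ)..x, f t := by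
    intro x
    rw [← intervalIntegral.integral_Iic_sub_Iic hf.integrableOn hf.integrableOn]
    ring
  have hd : HasDerivAt (fun x => (∫ t in Iic 0, f t) + ∫ t in (0:ℝ)..x, f t) (f z) z := by
    apply HasDerivAt.const_add
    exact intervalIntegral.integral_hasDerivAt_right (hc.intervalIntegrable 0 z)
      (hc.stronglyMeasurableAtFilter _ _) hc.continuousAt
  exact hd.congr_of_eventuallyEq (Eventually.of_forall key)

end CDF

lemma gCDF_tendsto : Tendsto stdNormalCDF atTop (𝓝 1) := by
  have := cdf_tendsto gInt (fun x => (gPos x).le)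
  rwa [gTotal] at this

lemma gCDF_lt_one (z : ℝ) : stdNormalCDF z < 1 := by
  have := cdf_lt gInt gPos gCont z
  rwa [gTotal] at this

lemma gCDF_hasDeriv (z : ℝ) : HasDerivAt stdNormalCDF (stdNormalPDF z) z :=
  cdf_hasDeriv gInt gCont z

lemma pCDF_tendsto (hp : 0 < p) (hlam : 0 < lam) :
    Tendsto (expPowerCDF p lam) atTop (𝓝 1) := by
  have := cdf_tendsto (pdfInt hp hlam) (fun x => (pdfPos hp hlam x).le)
  rwa [pdfTotal hp hlam] at this

lemma pCDF_lt_one (hp : 0 < p) (hlam : 0 < lam) (x : ℝ) : expPowerCDF p lam x < 1 := by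
  have := cdf_lt (pdfInt hp hlam) (pdfPos hp hlam) (pdfCont hp) x
  rwa [pdfTotal hp hlam] at this

lemma pCDF_mono (hp : 0 < p) (hlam : 0 < lam) : Monotone (expPowerCDF p lam) :=
  cdf_mono (pdfInt hp hlam) (fun x => (pdfPos hp hlam x).le)

lemma pCDF_hasDeriv (hp : 0 < p) (hlam : 0 < lam) (x : ℝ) :
    HasDerivAt (expPowerCDF p lam) (expPowerPDF p lam x) x :=
  cdf_hasDeriv (pdfInt hp hlam) (pdfCont hp) x

lemma gPDF_hasDeriv (z : ℝ) :
    HasDerivAt stdNormalPDF (-z * stdNormalPDF z) z := by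
  have h1 : HasDerivAt (fun z : ℝ => -z ^ 2 / 2) (-z) z := by
    have := ((hasDerivAt_pow 2 z).neg).div_const 2
    refine this.congr_deriv ?_
    push_cast; ring
  have h2 := (h1.exp).const_mul (1 / Real.sqrt (2 * Real.pi))
  refine h2.congr_deriv ?_
  unfold stdNormalPDF; ring

lemma gPDF_tendsto_zero : Tendsto stdNormalPDF atTop (𝓝 0) := by
  unfold stdNormalPDF
  rw [show (0:ℝ) = (1 / Real.sqrt (2 * Real.pi)) * 0 by ring]
  apply Tendsto.const_mul
  have h : Tendsto (fun z : ℝ => z ^ 2 / 2) atTop atTop :=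
    (tendsto_pow_atTop two_ne_zero).atTop_div_const (by norm_num)
  have h2 : Tendsto (fun z : ℝ => -z ^ 2 / 2) atTop atBot := by
    simpa [neg_div, Function.comp_def] using tendsto_neg_atTop_atBot.comp h
  exact Real.tendsto_exp_atBot.comp h2

lemma millsG : Tendsto (fun z => (1 - stdNormalCDF z) / (stdNormalPDF z / z)) atTop (𝓝 1) := by
  apply HasDerivAt.lhopital_zero_atTop
    (f' := fun z => -stdNormalPDF z)
    (g' := fun z => ((-z * stdNormalPDF z) * z - stdNormalPDF z * 1) / z ^ 2)
  · exact Eventually.of_forall fun z => ((gCDF_hasDeriv z).const_sub 1)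
  · filter_upwards [eventually_gt_atTop (0:ℝ)] with z hz
    exact (gPDF_hasDeriv z).div (hasDerivAt_id z) hz.ne'
  · filter_upwards [eventually_gt_atTop (0:ℝ)] with z hz
    apply div_ne_zero _ (by positivity)
    have : -z * stdNormalPDF z * z - stdNormalPDF z * 1 = -((z^2 + 1) * stdNormalPDF z) := by ring
    rw [this, neg_ne_zero]
    exact mul_ne_zero (by positivity) (gPos z).ne'
  · simpa using ((tendsto_const_nhds (x := (1:ℝ)) (f := atTop)).sub gCDF_tendsto)
  · exact gPDF_tendsto_zero.div_atTop tendsto_id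
  · have key : Tendsto (fun z : ℝ => z ^ 2 / (z ^ 2 + 1)) atTop (𝓝 1) := by
      have h2 : Tendsto (fun z : ℝ => z ^ 2 + 1) atTop atTop :=
        tendsto_atTop_add_const_right _ 1 (tendsto_pow_atTop two_ne_zero)
      have h3 : Tendsto (fun z : ℝ => 1 - 1 / (z ^ 2 + 1)) atTop (𝓝 1) := by
        have := ((tendsto_const_nhds (x := (1:ℝ)) (f := atTop)).div_atTop h2)
        simpa using ((tendsto_const_nhds (x := (1:ℝ)) (f := atTop)).sub this)
      apply h3.congr'
      filter_upwards [eventually_gt_atTop (0:ℝ)] with z hz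
      have : z ^ 2 + 1 ≠ 0 := by positivity
      field_simp
      ring
    apply key.congr'
    filter_upwards [eventually_gt_atTop (0:ℝ)] with z hz
    have hφ : stdNormalPDF z ≠ 0 := (gPos z).ne'
    have hz2 : z ^ 2 ≠ 0 := by positivity
    have heq : -z * stdNormalPDF z * z - stdNormalPDF z * 1 = -((z^2 + 1) * stdNormalPDF z) := by
      ring
    have hden : -z * stdNormalPDF z * z - stdNormalPDF z * 1 ≠ 0 := by
      rw [heq, neg_ne_zero]
      exact mul_ne_zero (by positivity) hφ
    rw [div_div_eq_mul_div, heq]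
    rw [show -stdNormalPDF z * z ^ 2 / -((z^2+1) * stdNormalPDF z)
      = stdNormalPDF z * z ^ 2 / (stdNormalPDF z * (z^2+1)) by rw [neg_mul, neg_div_neg_eq, mul_comm (z^2+1) (stdNormalPDF z)]]
    rw [mul_div_mul_left _ _ hφ]

lemma pTail_g_tendsto (hp : 0 < p) (hlam : 0 < lam) :
    Tendsto (fun x : ℝ => exp (-lam * x ^ p) * x ^ (1 - p)) atTop (𝓝 0) := by
  have h1 := tendsto_rpow_mul_exp_neg_mul_atTop_nhds_zero ((1 - p) / p) lam hlam
  have h2 := h1.comp (tendsto_rpow_atTop hp)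
  apply h2.congr'
  filter_upwards [eventually_gt_atTop (0:ℝ)] with x hx
  simp only [Function.comp]
  rw [← Real.rpow_mul hx.le, mul_comm p ((1-p)/p), div_mul_cancel₀ _ hp.ne', mul_comm]

lemma millsP (hp : 0 < p) (hlam : 0 < lam) :
    Tendsto (fun x => (1 - expPowerCDF p lam x) / (exp (-lam * x ^ p) * x ^ (1 - p)))
      atTop (𝓝 ((expPowerZ p lam * (lam * p))⁻¹)) := by
  set Z := expPowerZ p lam with hZ
  have hZ0 : 0 < Z := Zpos hp hlam
  apply HasDerivAt.lhopital_zero_atTop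
    (f' := fun x => -(Z⁻¹ * exp (-lam * x ^ p)))
    (g' := fun x => exp (-lam * x ^ p) * (-(lam * p) + (1 - p) * x ^ (-p)))
  · filter_upwards [eventually_gt_atTop (0:ℝ)] with x hx
    have := (pCDF_hasDeriv hp hlam x).const_sub 1
    refine this.congr_deriv ?_
    rw [expPowerPDF, abs_of_pos hx]
  · filter_upwards [eventually_gt_atTop (0:ℝ)] with x hx
    have h1 : HasDerivAt (fun x : ℝ => -lam * x ^ p) (-lam * (p * x ^ (p - 1))) x :=
      (Real.hasDerivAt_rpow_const (Or.inl hx.ne')).const_mul _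
    have h2 : HasDerivAt (fun x : ℝ => x ^ (1 - p)) ((1 - p) * x ^ (1 - p - 1)) x :=
      Real.hasDerivAt_rpow_const (Or.inl hx.ne')
    have h3 := (h1.exp).mul h2
    refine h3.congr_deriv (Eq.symm ?_)
    have e1 : x ^ (p - 1) * x ^ (1 - p) = 1 := by
      rw [← Real.rpow_add hx]; norm_num
    have e2 : x ^ (1 - p - 1) = x ^ (-p) := by
      congr 1; ring
    rw [e2]
    calc exp (-lam * x ^ p) * (-(lam * p) + (1 - p) * x ^ (-p))
        = exp (-lam * x ^ p) * (-(lam * p) * (x ^ (p-1) * x ^ (1-p)) + (1 - p) * x ^ (-p)) := by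
          rw [e1]; ring
      _ = exp (-lam * x ^ p) * (-lam * (p * x ^ (p - 1))) * x ^ (1 - p)
          + exp (-lam * x ^ p) * ((1 - p) * x ^ (-p)) := by ring
  · have htx : Tendsto (fun x : ℝ => -(lam * p) + (1 - p) * x ^ (-p)) atTop (𝓝 (-(lam * p))) := by
      have h0 : Tendsto (fun x : ℝ => x ^ (-p)) atTop (𝓝 0) := tendsto_rpow_neg_atTop hp
      simpa using (tendsto_const_nhds (x := -(lam*p)) (f := atTop)).add
        ((tendsto_const_nhds (x := 1 - p) (f := atTop)).mul h0)
    have hneg := htx.eventually_lt_const (by nlinarith : -(lam * p) < -(lam*p)/2)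
    filter_upwards [hneg] with x hx
    exact mul_ne_zero (exp_ne_zero _) (by nlinarith)
  · have := pCDF_tendsto hp hlam
    simpa using ((tendsto_const_nhds (x := (1:ℝ)) (f := atTop)).sub this)
  · exact pTail_g_tendsto hp hlam
  · have htx : Tendsto (fun x : ℝ => -(lam * p) + (1 - p) * x ^ (-p)) atTop (𝓝 (-(lam * p))) := by
      have h0 : Tendsto (fun x : ℝ => x ^ (-p)) atTop (𝓝 0) := tendsto_rpow_neg_atTop hp
      simpa using (tendsto_const_nhds (x := -(lam*p)) (f := atTop)).add
        ((tendsto_const_nhds (x := 1 - p) (f := atTop)).mul h0)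
    have hdiv : Tendsto (fun x : ℝ => -Z⁻¹ / (-(lam * p) + (1 - p) * x ^ (-p))) atTop
        (𝓝 (-Z⁻¹ / -(lam * p))) :=
      (tendsto_const_nhds (x := -Z⁻¹) (f := atTop)).div htx (neg_ne_zero.mpr (by positivity))
    have hval : -Z⁻¹ / -(lam * p) = (Z * (lam * p))⁻¹ := by
      rw [neg_div_neg_eq, mul_inv, div_eq_mul_inv]
    rw [← hval]
    apply hdiv.congr'
    have hneg := htx.eventually_lt_const (by nlinarith : -(lam * p) < -(lam*p)/2)
    filter_upwards [hneg] with x hx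
    have ht0 : -(lam * p) + (1 - p) * x ^ (-p) ≠ 0 := by nlinarith
    rw [neg_div, neg_div, neg_inj,
      mul_comm (exp (-lam * x ^ p)) (-(lam * p) + (1 - p) * x ^ (-p)),
      mul_div_mul_right _ _ (exp_ne_zero (-lam * x ^ p))]

lemma log_div_rpow_tendsto_zero (hr : 0 < p) :
    Tendsto (fun x : ℝ => Real.log x / x ^ p) atTop (𝓝 0) :=
  (isLittleO_log_rpow_atTop hr).tendsto_div_nhds_zero

lemma logG : Tendsto (fun z => Real.log (1 - stdNormalCDF z) / (z ^ 2 / 2)) atTop (𝓝 (-1)) := by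
  set c : ℝ := 1 / Real.sqrt (2 * Real.pi) with hc
  have hc0 : 0 < c := by rw [hc]; positivity
  have hz2 : Tendsto (fun z : ℝ => z ^ 2 / 2) atTop atTop :=
    (tendsto_pow_atTop two_ne_zero).atTop_div_const (by norm_num)
  have hA := millsG
  have hApos : ∀ᶠ z in atTop, 0 < (1 - stdNormalCDF z) / (stdNormalPDF z / z) :=
    hA.eventually_const_lt (by norm_num : (0:ℝ) < 1) |>.mono (fun z h => h)
  have hlogA : Tendsto (fun z => Real.log ((1 - stdNormalCDF z) / (stdNormalPDF z / z)))
      atTop (𝓝 0) := by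
    have := (Real.continuousAt_log one_ne_zero).tendsto.comp hA
    simpa [Function.comp_def] using this
  -- main decomposition
  have key : Tendsto (fun z =>
      Real.log ((1 - stdNormalCDF z) / (stdNormalPDF z / z)) / (z ^ 2 / 2)
      + Real.log c / (z ^ 2 / 2) + (-1) - Real.log z / (z ^ 2 / 2)) atTop (𝓝 (-1)) := by
    have t1 : Tendsto (fun z => Real.log ((1 - stdNormalCDF z) / (stdNormalPDF z / z))
        / (z ^ 2 / 2)) atTop (𝓝 0) := hlogA.div_atTop hz2
    have t2 : Tendsto (fun z : ℝ => Real.log c / (z ^ 2 / 2)) atTop (𝓝 0) :=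
      tendsto_const_nhds.div_atTop hz2
    have t3 : Tendsto (fun z : ℝ => Real.log z / (z ^ 2 / 2)) atTop (𝓝 0) := by
      have h4 := log_div_rpow_tendsto_zero (p := (2:ℝ)) (by norm_num)
      have : Tendsto (fun z : ℝ => 2 * (Real.log z / z ^ (2:ℝ))) atTop (𝓝 0) := by
        simpa using h4.const_mul 2
      apply this.congr'
      filter_upwards [eventually_gt_atTop (0:ℝ)] with z hz
      rw [show z ^ (2:ℝ) = z ^ (2:ℕ) from Real.rpow_natCast z 2]
      field_simp
    simpa using ((t1.add t2).add_const (-1)).sub t3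
  apply key.congr'
  filter_upwards [hApos, eventually_gt_atTop (0:ℝ)] with z hA0 hz
  have hφ : 0 < stdNormalPDF z := gPos z
  have hg0 : stdNormalPDF z / z ≠ 0 := (div_pos hφ hz).ne'
  have hdecomp : 1 - stdNormalCDF z
      = ((1 - stdNormalCDF z) / (stdNormalPDF z / z)) * (stdNormalPDF z / z) :=
    (div_mul_cancel₀ _ hg0).symm
  rw [hdecomp, Real.log_mul hA0.ne' hg0, Real.log_div hφ.ne' hz.ne',
    show stdNormalPDF z = c * Real.exp (-z^2/2) from rfl,
    Real.log_mul hc0.ne' (exp_ne_zero _), Real.log_exp]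
  field_simp
  ring

lemma logP (hp : 0 < p) (hlam : 0 < lam) :
    Tendsto (fun x => Real.log (1 - expPowerCDF p lam x) / (lam * x ^ p))
      atTop (𝓝 (-1)) := by
  set Z := expPowerZ p lam with hZdef
  have hZ0 : 0 < Z := Zpos hp hlam
  set c0 : ℝ := (Z * (lam * p))⁻¹ with hc0def
  have hc00 : 0 < c0 := by rw [hc0def]; positivity
  have hxp : Tendsto (fun x : ℝ => lam * x ^ p) atTop atTop :=
    (tendsto_rpow_atTop hp).const_mul_atTop hlam
  have hB := millsP hp hlam
  have hBpos : ∀ᶠ x in atTop,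
      0 < (1 - expPowerCDF p lam x) / (exp (-lam * x ^ p) * x ^ (1 - p)) :=
    hB.eventually_const_lt (by positivity : (0:ℝ) < c0) |>.mono (fun x h => h)
  have hlogB : Tendsto (fun x => Real.log ((1 - expPowerCDF p lam x)
      / (exp (-lam * x ^ p) * x ^ (1 - p)))) atTop (𝓝 (Real.log c0)) :=
    (Real.continuousAt_log hc00.ne').tendsto.comp hB
  have key : Tendsto (fun x =>
      Real.log ((1 - expPowerCDF p lam x) / (exp (-lam * x ^ p) * x ^ (1 - p))) / (lam * x ^ p)
      + (-1) + (1 - p) * (Real.log x / (lam * x ^ p))) atTop (𝓝 (-1)) := by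
    have t1 : Tendsto (fun x => Real.log ((1 - expPowerCDF p lam x)
        / (exp (-lam * x ^ p) * x ^ (1 - p))) / (lam * x ^ p)) atTop (𝓝 0) :=
      hlogB.div_atTop hxp
    have t3 : Tendsto (fun x : ℝ => (1 - p) * (Real.log x / (lam * x ^ p))) atTop (𝓝 0) := by
      have h4 := log_div_rpow_tendsto_zero hp
      have h5 : Tendsto (fun x : ℝ => lam⁻¹ * (Real.log x / x ^ p)) atTop (𝓝 0) := by
        simpa using h4.const_mul lam⁻¹
      have h6 : Tendsto (fun x : ℝ => Real.log x / (lam * x ^ p)) atTop (𝓝 0) := by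
        apply h5.congr'
        filter_upwards [eventually_gt_atTop (0:ℝ)] with x hx
        rw [div_mul_eq_div_div_swap, div_div]
        ring_nf
      simpa using h6.const_mul (1 - p)
    simpa using (t1.add_const (-1)).add t3
  apply key.congr'
  filter_upwards [hBpos, eventually_gt_atTop (0:ℝ)] with x hB0 hx
  have hxp0 : 0 < lam * x ^ p := by
    have := Real.rpow_pos_of_pos hx p; positivity
  have hg0 : exp (-lam * x ^ p) * x ^ (1 - p) ≠ 0 :=
    (mul_pos (exp_pos _) (Real.rpow_pos_of_pos hx _)).ne'
  have hdecomp : 1 - expPowerCDF p lam x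
      = ((1 - expPowerCDF p lam x) / (exp (-lam * x ^ p) * x ^ (1 - p)))
        * (exp (-lam * x ^ p) * x ^ (1 - p)) :=
    (div_mul_cancel₀ _ hg0).symm
  rw [hdecomp, Real.log_mul hB0.ne' hg0,
    Real.log_mul (exp_ne_zero _) (Real.rpow_pos_of_pos hx _).ne',
    Real.log_exp, Real.log_rpow hx]
  field_simp
  ring

section T
variable {T : ℝ → ℝ}

lemma T_atTop (hp : 0 < p) (hlam : 0 < lam)
    (hT : ∀ z, expPowerCDF p lam (T z) = stdNormalCDF z) : Tendsto T atTop atTop := by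
  rw [tendsto_atTop]
  intro M
  have h1 : expPowerCDF p lam M < 1 := pCDF_lt_one hp hlam M
  filter_upwards [gCDF_tendsto.eventually_const_lt h1] with z hz
  by_contra hle
  push_neg at hle
  have := pCDF_mono hp hlam hle.le
  rw [hT z] at this
  exact absurd (lt_of_lt_of_le hz this) (lt_irrefl _)

lemma ratio1 (hp : 0 < p) (hlam : 0 < lam)
    (hT : ∀ z, expPowerCDF p lam (T z) = stdNormalCDF z) :
    Tendsto (fun z => lam * T z ^ p / (z ^ 2 / 2)) atTop (𝓝 1) := by
  have ha := logG
  have hb : Tendsto (fun z => Real.log (1 - expPowerCDF p lam (T z)) / (lam * T z ^ p))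
      atTop (𝓝 (-1)) := (logP hp hlam).comp (T_atTop hp hlam hT)
  have hb' : Tendsto (fun z => Real.log (1 - stdNormalCDF z) / (lam * T z ^ p))
      atTop (𝓝 (-1)) := by
    apply hb.congr
    intro z; rw [hT z]
  have hdiv : Tendsto (fun z => (Real.log (1 - stdNormalCDF z) / (z ^ 2 / 2))
      / (Real.log (1 - stdNormalCDF z) / (lam * T z ^ p))) atTop (𝓝 1) := by
    have := ha.div hb' (by norm_num)
    simpa [Pi.div_def] using this
  apply hdiv.congr'
  have hTpos : ∀ᶠ z in atTop, 0 < T z := (T_atTop hp hlam hT).eventually_gt_atTop 0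
  have hΦ : ∀ᶠ z in atTop, (1:ℝ)/2 < stdNormalCDF z :=
    gCDF_tendsto.eventually_const_lt (by norm_num)
  filter_upwards [hTpos, hΦ, eventually_gt_atTop (0:ℝ)] with z hTz hΦz hz
  have h1 : 0 < 1 - stdNormalCDF z := by linarith [gCDF_lt_one z]
  have h2 : 1 - stdNormalCDF z < 1 := by linarith
  have hL : Real.log (1 - stdNormalCDF z) ≠ 0 := (Real.log_neg h1 h2).ne
  have hu : (0:ℝ) < z ^ 2 / 2 := by positivity
  have hv : 0 < lam * T z ^ p := by
    have := Real.rpow_pos_of_pos hTz p; positivity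
  field_simp
end T

lemma ratio2 {T : ℝ → ℝ} (hp : 0 < p) (hlam : 0 < lam)
    (hT : ∀ z, expPowerCDF p lam (T z) = stdNormalCDF z) :
    Tendsto (fun z => T z / (z ^ 2 / (2 * lam)) ^ (1/p)) atTop (𝓝 1) := by
  have h1 := ratio1 hp hlam hT
  have h2 : Tendsto (fun z => (lam * T z ^ p / (z ^ 2 / 2)) ^ (1/p)) atTop (𝓝 1) := by
    have hc := (Real.continuousAt_rpow_const 1 (1/p) (Or.inl one_ne_zero)).tendsto.comp h1
    simpa [Function.comp_def] using hc
  apply h2.congr'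
  have hTpos : ∀ᶠ z in atTop, 0 < T z := (T_atTop hp hlam hT).eventually_gt_atTop 0
  filter_upwards [hTpos, eventually_gt_atTop (0:ℝ)] with z hTz hz
  have hu : (0:ℝ) < z ^ 2 / (2 * lam) := by positivity
  have he : lam * T z ^ p / (z ^ 2 / 2) = T z ^ p / (z ^ 2 / (2 * lam)) := by
    field_simp
  rw [he, Real.div_rpow (Real.rpow_pos_of_pos hTz p).le hu.le,
    ← Real.rpow_mul hTz.le, mul_one_div, div_self hp.ne', Real.rpow_one]

theorem exp_power_transport_deriv_asymptotics (p lam : ℝ) (hp : 0 < p) (hlam : 0 < lam)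
    (T T' : ℝ → ℝ) (hT : ∀ z, expPowerCDF p lam (T z) = stdNormalCDF z)
    (hT' : ∀ z, T' z = stdNormalPDF z / expPowerPDF p lam (T z)) :
    Tendsto (fun z => T' z / ((z / (lam * p)) * (z ^ 2 / (2 * lam)) ^ (1 / p - 1)))
      atTop (nhds 1) := by
  set Z := expPowerZ p lam with hZdef
  have hZ0 : 0 < Z := Zpos hp hlam
  set c0 : ℝ := (Z * (lam * p))⁻¹ with hc0def
  have hc00 : 0 < c0 := by rw [hc0def]; positivity
  set A : ℝ → ℝ := fun z => (1 - stdNormalCDF z) / (stdNormalPDF z / z) with hAdef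
  set Bf : ℝ → ℝ := fun x => (1 - expPowerCDF p lam x) / (exp (-lam * x ^ p) * x ^ (1 - p))
    with hBdef
  have hTat : Tendsto T atTop atTop := T_atTop hp hlam hT
  -- factor 1 : Bf (T z) / (c0 * A z) → 1
  have hf1 : Tendsto (fun z => Bf (T z) / (c0 * A z)) atTop (𝓝 1) := by
    have h1 : Tendsto (fun z => Bf (T z)) atTop (𝓝 c0) := (millsP hp hlam).comp hTat
    have h2 : Tendsto (fun z => c0 * A z) atTop (𝓝 c0) := by
      have := millsG.const_mul c0
      simpa using this
    have := h1.div h2 hc00.ne'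
    simpa [div_self hc00.ne', Pi.div_def] using this
  -- factor 2 : ((z^2/(2 lam))^(1/p) / T z) ^ (p-1) → 1
  have hf2 : Tendsto (fun z => ((z ^ 2 / (2 * lam)) ^ (1/p) / T z) ^ (p - 1))
      atTop (𝓝 1) := by
    have h1 := ratio2 hp hlam hT
    have h2 : Tendsto (fun z => (z ^ 2 / (2 * lam)) ^ (1/p) / T z) atTop (𝓝 1) := by
      have := h1.inv₀ one_ne_zero
      simp only [inv_one] at this
      apply this.congr
      intro z
      rw [inv_div]
    have hc := (Real.continuousAt_rpow_const 1 (p-1) (Or.inl one_ne_zero)).tendsto.comp h2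
    simpa [Function.comp_def] using hc
  have hmul := hf1.mul hf2
  rw [mul_one] at hmul
  apply hmul.congr'
  have hTpos : ∀ᶠ z in atTop, 0 < T z := hTat.eventually_gt_atTop 0
  have hΦ : ∀ᶠ z in atTop, (1:ℝ)/2 < stdNormalCDF z :=
    gCDF_tendsto.eventually_const_lt (by norm_num)
  filter_upwards [hTpos, hΦ, eventually_gt_atTop (0:ℝ)] with z ht hΦz hz
  set t := T z with htdef
  set u : ℝ := z ^ 2 / (2 * lam) with hudef
  have hu : 0 < u := by rw [hudef]; positivity
  have hφ : 0 < stdNormalPDF z := gPos z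
  have hg0 : stdNormalPDF z / z ≠ 0 := (div_pos hφ hz).ne'
  have h1Φ : 0 < 1 - stdNormalCDF z := by linarith [gCDF_lt_one z]
  have hA0 : A z ≠ 0 := (div_pos h1Φ (div_pos hφ hz)).ne'
  have ht1p : (0:ℝ) < t ^ (1 - p) := Real.rpow_pos_of_pos ht _
  have hE1 : (0:ℝ) < exp (-lam * t ^ p) := exp_pos _
  -- the defining relation
  have hcon : A z * (stdNormalPDF z / z) = Bf t * (exp (-lam * t ^ p) * t ^ (1 - p)) := by
    show (1 - stdNormalCDF z) / (stdNormalPDF z / z) * (stdNormalPDF z / z)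
      = (1 - expPowerCDF p lam t) / (exp (-lam * t ^ p) * t ^ (1 - p))
        * (exp (-lam * t ^ p) * t ^ (1 - p))
    rw [div_mul_cancel₀ _ hg0, div_mul_cancel₀ _ (mul_pos hE1 ht1p).ne', htdef, hT z]
  have hφval : stdNormalPDF z = z * (Bf t * (exp (-lam * t ^ p) * t ^ (1 - p))) / A z := by
    rw [← hcon]
    field_simp
  -- rpow algebra
  have e3 : t ^ (p - 1) = (t ^ (1 - p))⁻¹ := by
    rw [← Real.rpow_neg ht.le]; congr 1; ring
  have e1 : (u ^ (1/p) / t) ^ (p - 1) = (u ^ (1/p - 1))⁻¹ * (t ^ (1 - p)) := by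
    rw [Real.div_rpow (Real.rpow_nonneg hu.le _) ht.le, ← Real.rpow_mul hu.le, e3, div_eq_mul_inv, inv_inv]
    have h9 : 1/p * (p - 1) = -(1/p - 1) := by field_simp; ring
    rw [h9, Real.rpow_neg hu.le]
  have hv : (0:ℝ) < u ^ (1/p - 1) := Real.rpow_pos_of_pos hu _
  -- now the computation
  rw [hT' z, expPowerPDF, ← hZdef, show |T z| = t by rw [← htdef, abs_of_pos ht], e1, hφval,
    hc0def]
  field_simp
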